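/- Let S ⋈ G be a terminating ordered join and σ : S → S a weakly order-preserving involution such that Γ₁(G_i) = Γ₁(G_{σ(i)}) for all i and the fixed-point set S^σ of σ is a lower set of S. Then Γ₀(S ⋈ G) = Γ₀(S^σ ⋈ G), the ordered join restricted to the fixed points. -/

import Mathlib

/-! The combinatorial game theory of the older Mathlib (`SetTheory.PGame`, `Nimber`,
`SetTheory.PGame.Impartial`, `SetTheory.PGame.grundyValue`) has been removed from Mathlib;
it is reconstructed here with its old meaning. -/

universe u

/-- Nimbers: a type synonym of `Ordinal` (only equality of nimbers is used below). -/
def Nimber : Type (u + 1) := Ordinal.{u}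

namespace Nimber

/-- The identity map from ordinals to nimbers. -/
def ofOrdinal (o : Ordinal.{u}) : Nimber.{u} := o

/-- The identity map from nimbers to ordinals. -/
def toOrdinal (a : Nimber.{u}) : Ordinal.{u} := a

end Nimber

namespace SetTheory

/-- Pre-games, as in the older Mathlib. -/
inductive PGame : Type (u + 1)
  | mk : ∀ α β : Type u, (α → PGame) → (β → PGame) → PGame

namespace PGame

/-- The type of left moves. -/
def LeftMoves : PGame.{u} → Type u
  | mk l _ _ _ => l

/-- The type of right moves. -/
def RightMoves : PGame.{u} → Type u
  | mk _ r _ _ => r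

/-- The left options. -/
def moveLeft : ∀ g : PGame.{u}, LeftMoves g → PGame.{u}
  | mk _ _ L _ => L

/-- The right options. -/
def moveRight : ∀ g : PGame.{u}, RightMoves g → PGame.{u}
  | mk _ _ _ R => R

/-- The game with no moves. -/
instance : Zero PGame.{u} :=
  ⟨⟨PEmpty, PEmpty, PEmpty.elim, PEmpty.elim⟩⟩

/-- Negation of pre-games. -/
def neg : PGame.{u} → PGame.{u}
  | ⟨l, r, L, R⟩ => ⟨r, l, fun i => neg (R i), fun i => neg (L i)⟩

instance : Neg PGame.{u} :=
  ⟨neg⟩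

/-- The pair `(x ≤ y, x ⧏ y)`, defined by simultaneous recursion as in the older Mathlib:
`x ≤ y ↔ (∀ i, xL i ⧏ y) ∧ (∀ j, x ⧏ yR j)` and `x ⧏ y ↔ (∃ i, x ≤ yL i) ∨ (∃ j, xR j ≤ y)`. -/
noncomputable def leLF : PGame.{u} → PGame.{u} → Prop × Prop :=
  fun x => PGame.rec (motive := fun _ => PGame.{u} → Prop × Prop)
    (fun xl xr xL xR IHl IHr => fun y =>
      PGame.rec (motive := fun _ => Prop × Prop)
        (fun yl yr yL yR JHl JHr =>
          ((∀ i : xl, (IHl i (mk yl yr yL yR)).2) ∧ ∀ j : yr, (JHr j).2,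
            (∃ i : yl, (JHl i).1) ∨ ∃ j : xr, (IHr j (mk yl yr yL yR)).1))
        y)
    x

/-- The less or equal relation on pre-games. -/
instance : LE PGame.{u} :=
  ⟨fun x y => (leLF x y).1⟩

/-- Equivalence of pre-games: `x ≤ y ∧ y ≤ x`. -/
def Equiv (x y : PGame.{u}) : Prop :=
  x ≤ y ∧ y ≤ x

instance : HasEquiv PGame.{u} :=
  ⟨Equiv⟩

/-- Auxiliary definition of impartiality. -/
def ImpartialAux : PGame.{u} → Prop
  | mk l r L R => (mk l r L R ≈ -mk l r L R) ∧ (∀ i : l, ImpartialAux (L i)) ∧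
      ∀ j : r, ImpartialAux (R j)

/-- A pre-game is impartial if it is equivalent to its negative, and so are all its options,
recursively. -/
class Impartial (G : PGame.{u}) : Prop where
  out : ImpartialAux G

/-- The Grundy value of a pre-game: the least ordinal (as a nimber) not among the Grundy values
of its left options. -/
noncomputable def grundyValue : PGame.{u} → Nimber.{u}
  | mk _ _ L _ => Nimber.ofOrdinal (sInf (Set.range fun i => Nimber.toOrdinal (grundyValue (L i)))ᶜ)

end PGame

end SetTheory

open SetTheory PGame Nimber

noncomputable section
open Classical in
/-- The state resulting from a (Left) move in component `i₀` of an ordered join: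
all components strictly above `i₀` are replaced by the empty game `0`. -/
def ojNextL {S : Type} [PartialOrder S] (x : S → PGame) (i₀ : S) (j : (x i₀).LeftMoves) :
    S → PGame :=
  fun i => if i = i₀ then (x i₀).moveLeft j else if i₀ < i then 0 else x i

open Classical in
def ojNextR {S : Type} [PartialOrder S] (x : S → PGame) (i₀ : S) (j : (x i₀).RightMoves) :
    S → PGame :=
  fun i => if i = i₀ then (x i₀).moveRight j else if i₀ < i then 0 else x i

/-- The move relation of the ordered join: `OJRel y x` iff `y` results from `x` by a single move. -/
def OJRel {S : Type} [PartialOrder S] (y x : S → PGame) : Prop :=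
  (∃ i₀ j, y = ojNextL x i₀ j) ∨ (∃ i₀ j, y = ojNextR x i₀ j)

theorem ojrel_L {S : Type} [PartialOrder S] (x : S → PGame) (i₀ : S) (j : (x i₀).LeftMoves) :
    OJRel (ojNextL x i₀ j) x := Or.inl ⟨i₀, j, rfl⟩

theorem ojrel_R {S : Type} [PartialOrder S] (x : S → PGame) (i₀ : S) (j : (x i₀).RightMoves) :
    OJRel (ojNextR x i₀ j) x := Or.inr ⟨i₀, j, rfl⟩

/-- The ordered join of a family of games, as a game, given a termination certificate. -/
def ojoinAcc {S : Type} [PartialOrder S] : ∀ x : S → PGame, Acc OJRel x → PGame := fun x h =>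
  Acc.rec (motive := fun x _ => PGame)
    (fun x _ ih =>
      PGame.mk (Σ i₀ : S, (x i₀).LeftMoves) (Σ i₀ : S, (x i₀).RightMoves)
        (fun p => ih _ (ojrel_L x p.1 p.2))
        (fun p => ih _ (ojrel_R x p.1 p.2))) h

open Classical in
/-- The ordered join `S ⋈ G` of a family of games `G` over the poset `S`.
(Defined as `0` in the degenerate non-terminating case.) -/
def ojoin {S : Type} [PartialOrder S] (x : S → PGame) : PGame :=
  if h : Acc OJRel x then ojoinAcc x h else 0

/-- The Grundy set `Γ₁(G)`: the set of Grundy numbers of the options of `G`. -/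
def grundySet (G : PGame) : Set Nimber :=
  Set.range fun i => grundyValue (G.moveLeft i)
end

/-- An involution `σ` of a poset is weakly order-preserving if for each `i` the upper set
`{ j | i < j ∨ σ i < j }` is `σ`-invariant. -/
def WeaklyOrderPreserving {S : Type} [PartialOrder S] (σ : S → S) : Prop :=
  ∀ i : S, σ '' {j | i < j ∨ σ i < j} = {j | i < j ∨ σ i < j}

noncomputable instance : LinearOrder Nimber := inferInstanceAs (LinearOrder Ordinal)

namespace SetTheory.PGame

theorem zero_leftMoves : LeftMoves 0 = PEmpty := rfl

theorem zero_rightMoves : RightMoves 0 = PEmpty := rfl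

theorem grundyValue_ne_moveLeft {G : PGame} (i : G.LeftMoves) :
    grundyValue (G.moveLeft i) ≠ grundyValue G := by
  cases G with
  | mk l r L R =>
    intro h
    have hmem : Nimber.toOrdinal (grundyValue (L i))
        ∈ Set.range (fun i => Nimber.toOrdinal (grundyValue (L i))) := ⟨i, rfl⟩
    have hne := csInf_mem (Ordinal.nonempty_compl_range
      (fun i => Nimber.toOrdinal (grundyValue (L i))))
    apply hne
    have h' : Nimber.toOrdinal (grundyValue (L i))
        = sInf (Set.range (fun i => Nimber.toOrdinal (grundyValue (L i))))ᶜ := h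
    rw [← h']
    exact hmem

theorem exists_grundyValue_moveLeft_of_lt {G : PGame} {o : Nimber} (h : o < grundyValue G) :
    ∃ i, grundyValue (G.moveLeft i) = o := by
  cases G with
  | mk l r L R =>
    have h' : Nimber.toOrdinal o
        < sInf (Set.range (fun i => Nimber.toOrdinal (grundyValue (L i))))ᶜ := h
    have := notMem_of_lt_csInf' h'
    rw [Set.notMem_compl_iff] at this
    exact this

theorem grundyValue_le_of_forall_moveLeft {G : PGame} {o : Nimber}
    (h : ∀ i, grundyValue (G.moveLeft i) ≠ o) : grundyValue G ≤ o := by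
  cases G with
  | mk l r L R =>
    show sInf (Set.range (fun i => Nimber.toOrdinal (grundyValue (L i))))ᶜ ≤ Nimber.toOrdinal o
    apply csInf_le'
    rintro ⟨i, hi⟩
    exact h i hi

end SetTheory.PGame

namespace OJAux

open SetTheory PGame Relation

variable {S : Type} [PartialOrder S]

theorem ne_zero_of_leftMoves {G : PGame} (j : G.LeftMoves) : G ≠ 0 := by
  intro h
  exact (cast (by rw [h]; exact PGame.zero_leftMoves) j : PEmpty).elim

theorem moveLeft_cast {G H : PGame} (e : G = H) (j : G.LeftMoves) :
    H.moveLeft (cast (congrArg PGame.LeftMoves e) j) = G.moveLeft j := by subst e; rfl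

theorem moveRight_cast {G H : PGame} (e : G = H) (j : G.RightMoves) :
    H.moveRight (cast (congrArg PGame.RightMoves e) j) = G.moveRight j := by subst e; rfl

theorem ojNextL_self (x : S → PGame) (i₀ : S) (j : (x i₀).LeftMoves) :
    ojNextL x i₀ j i₀ = (x i₀).moveLeft j := if_pos rfl

theorem ojNextL_lt (x : S → PGame) {i₀ k : S} (j : (x i₀).LeftMoves) (h : i₀ < k) :
    ojNextL x i₀ j k = 0 := by
  have hne : k ≠ i₀ := fun e => absurd (e ▸ h) (lt_irrefl _)
  simp only [ojNextL]
  rw [if_neg hne, if_pos h]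

theorem ojNextL_other (x : S → PGame) {i₀ k : S} (j : (x i₀).LeftMoves)
    (h1 : k ≠ i₀) (h2 : ¬ i₀ < k) : ojNextL x i₀ j k = x k := by
  simp only [ojNextL]
  rw [if_neg h1, if_neg h2]

theorem ojNextR_self (x : S → PGame) (i₀ : S) (j : (x i₀).RightMoves) :
    ojNextR x i₀ j i₀ = (x i₀).moveRight j := if_pos rfl

theorem ojNextR_lt (x : S → PGame) {i₀ k : S} (j : (x i₀).RightMoves) (h : i₀ < k) :
    ojNextR x i₀ j k = 0 := by
  have hne : k ≠ i₀ := fun e => absurd (e ▸ h) (lt_irrefl _)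
  simp only [ojNextR]
  rw [if_neg hne, if_pos h]

theorem ojNextR_other (x : S → PGame) {i₀ k : S} (j : (x i₀).RightMoves)
    (h1 : k ≠ i₀) (h2 : ¬ i₀ < k) : ojNextR x i₀ j k = x k := by
  simp only [ojNextR]
  rw [if_neg h1, if_neg h2]

theorem ojoin_of_acc (x : S → PGame) (h : Acc OJRel x) : ojoin x = ojoinAcc x h := dif_pos h

theorem ojoin_eq (x : S → PGame) (h : Acc OJRel x) :
    ojoin x = PGame.mk (Σ i₀ : S, (x i₀).LeftMoves) (Σ i₀ : S, (x i₀).RightMoves)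
      (fun p => ojoin (ojNextL x p.1 p.2)) (fun p => ojoin (ojNextR x p.1 p.2)) := by
  rw [ojoin_of_acc x h]
  cases h with
  | intro x h' =>
    show PGame.mk (Σ i₀ : S, (x i₀).LeftMoves) (Σ i₀ : S, (x i₀).RightMoves)
        (fun p => ojoinAcc (ojNextL x p.1 p.2) (h' _ (ojrel_L x p.1 p.2)))
        (fun p => ojoinAcc (ojNextR x p.1 p.2) (h' _ (ojrel_R x p.1 p.2))) = _
    congr 1
    · funext p; exact (ojoin_of_acc _ _).symm
    · funext p; exact (ojoin_of_acc _ _).symm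

theorem gv_ojoin_ne {x : S → PGame} (h : Acc OJRel x) (i₀ : S) (j : (x i₀).LeftMoves) :
    grundyValue (ojoin (ojNextL x i₀ j)) ≠ grundyValue (ojoin x) := by
  conv_rhs => rw [ojoin_eq x h]
  exact grundyValue_ne_moveLeft
    (G := PGame.mk (Σ i₀ : S, (x i₀).LeftMoves) (Σ i₀ : S, (x i₀).RightMoves)
      (fun p => ojoin (ojNextL x p.1 p.2)) (fun p => ojoin (ojNextR x p.1 p.2))) ⟨i₀, j⟩


theorem acc_subPos : ∀ {x : S → PGame}, Acc OJRel x →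
    ∀ {y : S → PGame}, (∀ i, y i = x i ∨ y i = 0) → Acc OJRel y := by
  intro x hx
  induction hx with
  | intro x _ ih =>
    intro y hy
    constructor
    rintro z (⟨i₀, j, rfl⟩ | ⟨i₀, j, rfl⟩)
    · rcases hy i₀ with e | e
      · refine ih _ (ojrel_L x i₀ (cast (congrArg PGame.LeftMoves e) j)) ?_
        intro i
        by_cases h1 : i = i₀
        · subst h1
          left
          rw [ojNextL_self, ojNextL_self, moveLeft_cast e j]
        · by_cases h2 : i₀ < i
          · right; exact ojNextL_lt _ _ h2
          · rw [ojNextL_other _ _ h1 h2, ojNextL_other _ _ h1 h2]; exact hy i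
      · exact (cast (by rw [e]; exact PGame.zero_leftMoves) j : PEmpty).elim
    · rcases hy i₀ with e | e
      · refine ih _ (ojrel_R x i₀ (cast (congrArg PGame.RightMoves e) j)) ?_
        intro i
        by_cases h1 : i = i₀
        · subst h1
          left
          rw [ojNextR_self, ojNextR_self, moveRight_cast e j]
        · by_cases h2 : i₀ < i
          · right; exact ojNextR_lt _ _ h2
          · rw [ojNextR_other _ _ h1 h2, ojNextR_other _ _ h1 h2]; exact hy i
      · exact (cast (by rw [e]; exact PGame.zero_rightMoves) j : PEmpty).elim

open Classical in
noncomputable def ext0 (p : S → Prop) (y : {i : S // p i} → PGame) : S → PGame :=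
  fun i => if h : p i then y ⟨i, h⟩ else 0

open Classical in
theorem ext0_pos (p : S → Prop) (y : {i : S // p i} → PGame) {i : S} (hp : p i) :
    ext0 p y i = y ⟨i, hp⟩ := by
  show (if h : p i then y ⟨i, h⟩ else 0) = _
  rw [dif_pos hp]

open Classical in
theorem ext0_neg (p : S → Prop) (y : {i : S // p i} → PGame) {i : S} (hp : ¬ p i) :
    ext0 p y i = 0 := by
  show (if h : p i then y ⟨i, h⟩ else 0) = _
  rw [dif_neg hp]

open Classical in
theorem ext0_sim {p : S → Prop} {y z : {i : S // p i} → PGame} (h : OJRel z y) :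
    OJRel (ext0 p z) (ext0 p y) := by
  rcases h with ⟨i₀, j, rfl⟩ | ⟨i₀, j, rfl⟩
  · have e : y i₀ = ext0 p y ↑i₀ := (ext0_pos p y i₀.2).symm
    refine Or.inl ⟨↑i₀, cast (congrArg PGame.LeftMoves e) j, ?_⟩
    funext i
    show (if h : p i then ojNextL y i₀ j ⟨i, h⟩ else 0) = _
    by_cases hp : p i
    · rw [dif_pos hp]
      by_cases h1 : i = (↑i₀ : S)
      · subst h1
        have h2 : (⟨(↑i₀ : S), hp⟩ : {i : S // p i}) = i₀ := Subtype.ext rfl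
        rw [h2, ojNextL_self, ojNextL_self, moveLeft_cast e j]
      · have h1' : (⟨i, hp⟩ : {i : S // p i}) ≠ i₀ := fun h => h1 (congrArg Subtype.val h)
        by_cases h2 : (↑i₀ : S) < i
        · rw [ojNextL_lt _ _ h2, ojNextL_lt _ _ (show i₀ < ⟨i, hp⟩ from Subtype.coe_lt_coe.mp h2)]
        · have h2' : ¬ i₀ < ⟨i, hp⟩ := fun hh => h2 (Subtype.coe_lt_coe.mpr hh)
          rw [ojNextL_other _ _ h1' h2', ojNextL_other _ _ h1 h2]
          exact (ext0_pos p y hp).symm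
    · rw [dif_neg hp]
      have h1 : i ≠ (↑i₀ : S) := fun h => hp (h ▸ i₀.2)
      by_cases h2 : (↑i₀ : S) < i
      · rw [ojNextL_lt _ _ h2]
      · rw [ojNextL_other _ _ h1 h2]
        exact (ext0_neg p y hp).symm
  · have e : y i₀ = ext0 p y ↑i₀ := (ext0_pos p y i₀.2).symm
    refine Or.inr ⟨↑i₀, cast (congrArg PGame.RightMoves e) j, ?_⟩
    funext i
    show (if h : p i then ojNextR y i₀ j ⟨i, h⟩ else 0) = _
    by_cases hp : p i
    · rw [dif_pos hp]
      by_cases h1 : i = (↑i₀ : S)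
      · subst h1
        have h2 : (⟨(↑i₀ : S), hp⟩ : {i : S // p i}) = i₀ := Subtype.ext rfl
        rw [h2, ojNextR_self, ojNextR_self, moveRight_cast e j]
      · have h1' : (⟨i, hp⟩ : {i : S // p i}) ≠ i₀ := fun h => h1 (congrArg Subtype.val h)
        by_cases h2 : (↑i₀ : S) < i
        · rw [ojNextR_lt _ _ h2, ojNextR_lt _ _ (show i₀ < ⟨i, hp⟩ from Subtype.coe_lt_coe.mp h2)]
        · have h2' : ¬ i₀ < ⟨i, hp⟩ := fun hh => h2 (Subtype.coe_lt_coe.mpr hh)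
          rw [ojNextR_other _ _ h1' h2', ojNextR_other _ _ h1 h2]
          exact (ext0_pos p y hp).symm
    · rw [dif_neg hp]
      have h1 : i ≠ (↑i₀ : S) := fun h => hp (h ▸ i₀.2)
      by_cases h2 : (↑i₀ : S) < i
      · rw [ojNextR_lt _ _ h2]
      · rw [ojNextR_other _ _ h1 h2]
        exact (ext0_neg p y hp).symm

theorem acc_restrict (p : S → Prop) {x : S → PGame} (h : Acc OJRel x) :
    Acc OJRel (fun i : {i : S // p i} => x ↑i) := by
  have h0 : Acc OJRel (ext0 p (fun i : {i : S // p i} => x ↑i)) := by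
    apply acc_subPos h
    intro i
    by_cases hp : p i
    · left; exact ext0_pos p _ hp
    · right; exact ext0_neg p _ hp
  exact Subrelation.accessible (fun h' => ext0_sim h') (InvImage.accessible _ h0)

end OJAux

namespace OJAux
open SetTheory PGame Relation

variable {S : Type} [PartialOrder S] {σ : S → S}

/-- The symmetry invariant maintained during play. -/
def Sym (σ : S → S) (x : S → PGame) : Prop :=
  ∀ i, grundySet (x i) = grundySet (x (σ i)) ∨
    (grundyValue (x i) = grundyValue (x (σ i)) ∧ ∀ k, (i < k ∨ σ i < k) → x k = 0)

section

variable (hinv : ∀ i, σ (σ i) = i) (hw : WeaklyOrderPreserving σ)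

include hinv hw in
theorem memU_sigma {i₀ k : S} (h : i₀ < k ∨ σ i₀ < k) : i₀ < σ k ∨ σ i₀ < σ k := by
  have hk : k ∈ σ '' {j | i₀ < j ∨ σ i₀ < j} := by rw [hw i₀]; exact h
  obtain ⟨m, hm, rfl⟩ := hk
  rw [hinv m]
  exact hm

include hinv hw in
theorem not_lt_sigma (i₀ : S) : ¬ i₀ < σ i₀ := by
  intro h
  rcases memU_sigma hinv hw (Or.inl h) (k := σ i₀) with h' | h'
  · rw [hinv] at h'; exact lt_irrefl _ h'
  · rw [hinv] at h'; exact lt_irrefl _ (h.trans h')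

include hinv hw in
theorem not_sigma_lt (i₀ : S) : ¬ σ i₀ < i₀ := by
  intro h
  rcases memU_sigma hinv hw (Or.inr h) (k := i₀) with h' | h'
  · exact not_lt_sigma hinv hw i₀ h'
  · exact lt_irrefl _ h'

include hinv in
theorem fixed_not_above (hfix : IsLowerSet {i : S | σ i = i}) {i₀ t : S}
    (hs : ¬ σ i₀ = i₀) (ht : σ t = t) : ¬ i₀ < t ∧ ¬ σ i₀ < t := by
  constructor
  · intro h
    exact hs (hfix h.le ht)
  · intro h
    have h2 : σ (σ i₀) = σ i₀ := hfix h.le ht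
    rw [hinv] at h2
    exact hs h2.symm

include hinv hw in
theorem sym_fixed_move {x : S → PGame} (hsym : Sym σ x) {i₀ : S} (hs : σ i₀ = i₀)
    (j : (x i₀).LeftMoves) : Sym σ (ojNextL x i₀ j) := by
  intro i
  by_cases hi1 : i = i₀
  · subst hi1
    left
    rw [hs]
  · have hσ1 : σ i ≠ i₀ := by
      intro h
      apply hi1
      have h' := congrArg σ h
      rw [hinv, hs] at h'
      exact h'
    by_cases hU : i₀ < i
    · have hU' : i₀ < σ i := by
        rcases memU_sigma hinv hw (Or.inl hU) with h | h
        · exact h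
        · rwa [hs] at h
      left
      rw [ojNextL_lt _ _ hU, ojNextL_lt _ _ hU']
    · have hU' : ¬ i₀ < σ i := by
        intro h
        rcases memU_sigma hinv hw (Or.inl h) with h' | h'
        · rw [hinv] at h'; exact hU h'
        · rw [hinv, hs] at h'; exact hU h'
      rw [ojNextL_other _ _ hi1 hU, ojNextL_other _ _ hσ1 hU']
      rcases hsym i with h | ⟨hg, h0⟩
      · exact Or.inl h
      · right
        refine ⟨hg, fun k hk => ?_⟩
        have hxk := h0 k hk
        have hk1 : k ≠ i₀ := fun h => ne_zero_of_leftMoves j (h ▸ hxk)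
        by_cases hkU : i₀ < k
        · exact ojNextL_lt _ _ hkU
        · rw [ojNextL_other _ _ hk1 hkU]; exact hxk

theorem restrict_fixed_move {x : S → PGame} {i₀ : S} (hs : σ i₀ = i₀) (j : (x i₀).LeftMoves) :
    (fun i : {i : S // σ i = i} => ojNextL x i₀ j ↑i)
      = ojNextL (fun i : {i : S // σ i = i} => x ↑i) ⟨i₀, hs⟩ j := by
  funext t
  show ojNextL x i₀ j ↑t = _
  by_cases h1 : t = (⟨i₀, hs⟩ : {i : S // σ i = i})
  · subst h1
    exact (ojNextL_self x i₀ j).trans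
      (ojNextL_self (fun i : {i : S // σ i = i} => x ↑i) ⟨i₀, hs⟩ j).symm
  · have h1' : (↑t : S) ≠ i₀ := fun h => h1 (Subtype.ext h)
    by_cases h2 : (⟨i₀, hs⟩ : {i : S // σ i = i}) < t
    · rw [ojNextL_lt _ _ (show i₀ < (↑t : S) from Subtype.coe_lt_coe.mpr h2),
        ojNextL_lt _ _ h2]
    · have h2' : ¬ i₀ < (↑t : S) := fun h => h2 (Subtype.coe_lt_coe.mp h)
      rw [ojNextL_other _ _ h1' h2', ojNextL_other _ _ h1 h2]

include hinv hw in
theorem main_aux (hfix : IsLowerSet {i : S | σ i = i}) :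
    ∀ x : S → PGame, Acc (Relation.TransGen OJRel) x → Acc OJRel x → Sym σ x →
    grundyValue (ojoin x)
      = grundyValue (ojoin (fun i : {i : S // σ i = i} => x ↑i)) := by
  intro x h
  induction h with
  | intro x _ ih =>
  intro hx hsym
  have hrx : Acc OJRel (fun i : {i : S // σ i = i} => x ↑i) := acc_restrict _ hx
  have hfixmove : ∀ (i₀ : S) (hs : σ i₀ = i₀) (j : (x i₀).LeftMoves),
      grundyValue (ojoin (ojNextL x i₀ j))
        = grundyValue (ojoin (ojNextL (fun i : {i : S // σ i = i} => x ↑i) ⟨i₀, hs⟩ j)) := by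
    intro i₀ hs j
    have hh := ih _ (TransGen.single (ojrel_L x i₀ j)) (hx.inv (ojrel_L x i₀ j))
      (sym_fixed_move hinv hw hsym hs j)
    rwa [restrict_fixed_move hs j] at hh
  have hA : ∀ (i₀ : S) (j : (x i₀).LeftMoves),
      grundyValue (ojoin (ojNextL x i₀ j))
        ≠ grundyValue (ojoin (fun i : {i : S // σ i = i} => x ↑i)) := by
    intro i₀ j
    by_cases hs : σ i₀ = i₀
    · rw [hfixmove i₀ hs j]
      exact gv_ojoin_ne hrx ⟨i₀, hs⟩ j
    · have h1 : ¬ i₀ < σ i₀ := not_lt_sigma hinv hw i₀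
      have h2 : ¬ σ i₀ < i₀ := not_sigma_lt hinv hw i₀
      have hyacc : Acc OJRel (ojNextL x i₀ j) := hx.inv (ojrel_L x i₀ j)
      obtain ⟨c, jc, hsymz, hresz⟩ : ∃ (c : S) (jc : ((ojNextL x i₀ j) c).LeftMoves),
          Sym σ (ojNextL (ojNextL x i₀ j) c jc) ∧
          (fun i : {i : S // σ i = i} => ojNextL (ojNextL x i₀ j) c jc ↑i)
            = (fun i : {i : S // σ i = i} => x ↑i) := by
        have mirror : ∀ (j' : (x (σ i₀)).LeftMoves),
            grundyValue ((x (σ i₀)).moveLeft j') = grundyValue ((x i₀).moveLeft j) →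
            ∃ (c : S) (jc : ((ojNextL x i₀ j) c).LeftMoves),
              Sym σ (ojNextL (ojNextL x i₀ j) c jc) ∧
              (fun i : {i : S // σ i = i} => ojNextL (ojNextL x i₀ j) c jc ↑i)
                = (fun i : {i : S // σ i = i} => x ↑i) := by
          intro j' hj'
          have e : x (σ i₀) = ojNextL x i₀ j (σ i₀) := (ojNextL_other x j hs h1).symm
          refine ⟨σ i₀, cast (congrArg PGame.LeftMoves e) j', ?_⟩
          set zc := cast (congrArg PGame.LeftMoves e) j' with hzcdef
          have hzσ : ojNextL (ojNextL x i₀ j) (σ i₀) zc (σ i₀) = (x (σ i₀)).moveLeft j' := by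
            rw [ojNextL_self]; exact moveLeft_cast e j'
          have hzi : ojNextL (ojNextL x i₀ j) (σ i₀) zc i₀ = (x i₀).moveLeft j := by
            rw [ojNextL_other _ _ (show (i₀ : S) ≠ σ i₀ from fun h => hs h.symm) h2,
              ojNextL_self]
          have hz0 : ∀ k, (i₀ < k ∨ σ i₀ < k) → ojNextL (ojNextL x i₀ j) (σ i₀) zc k = 0 := by
            intro k hk
            have hk2 : k ≠ σ i₀ := by
              rintro rfl
              rcases hk with h | h
              exacts [h1 h, lt_irrefl _ h]
            rcases hk with h | h
            · by_cases hσk : σ i₀ < k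
              · exact ojNextL_lt _ _ hσk
              · rw [ojNextL_other _ _ hk2 hσk]
                exact ojNextL_lt _ _ h
            · exact ojNextL_lt _ _ h
          have hzother : ∀ k, k ≠ i₀ → k ≠ σ i₀ → ¬ i₀ < k → ¬ σ i₀ < k →
              ojNextL (ojNextL x i₀ j) (σ i₀) zc k = x k := by
            intro k hk1 hk2 hk3 hk4
            rw [ojNextL_other _ _ hk2 hk4, ojNextL_other _ _ hk1 hk3]
          constructor
          · intro i
            by_cases hi1 : i = i₀
            · subst hi1
              right
              refine ⟨?_, hz0⟩
              rw [hzi, hzσ, hj']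
            · by_cases hi2 : i = σ i₀
              · subst hi2
                right
                constructor
                · rw [hzσ, hinv, hzi, hj']
                · intro k hk
                  apply hz0 k
                  rcases hk with h | h
                  · exact Or.inr h
                  · rw [hinv] at h; exact Or.inl h
              · have hσi1 : σ i ≠ i₀ := by
                  intro h
                  have h' := congrArg σ h
                  rw [hinv] at h'
                  exact hi2 h'
                have hσi2 : σ i ≠ σ i₀ := by
                  intro h
                  have h' := congrArg σ h
                  rw [hinv, hinv] at h'
                  exact hi1 h'
                by_cases hU : i₀ < i ∨ σ i₀ < i
                · left
                  rw [hz0 i hU, hz0 (σ i) (memU_sigma hinv hw hU)]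
                · have hU' : ¬ (i₀ < σ i ∨ σ i₀ < σ i) := by
                    intro h
                    have h' := memU_sigma hinv hw h
                    rw [hinv] at h'
                    exact hU h'
                  push_neg at hU hU'
                  rw [hzother i hi1 hi2 hU.1 hU.2, hzother (σ i) hσi1 hσi2 hU'.1 hU'.2]
                  rcases hsym i with h | ⟨hg, h0⟩
                  · exact Or.inl h
                  · right
                    refine ⟨hg, fun k hk => ?_⟩
                    have hxk := h0 k hk
                    have hk1 : k ≠ i₀ := fun h => ne_zero_of_leftMoves j (h ▸ hxk)
                    have hk2 : k ≠ σ i₀ := fun h => ne_zero_of_leftMoves j' (h ▸ hxk)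
                    by_cases hkU : i₀ < k ∨ σ i₀ < k
                    · exact hz0 k hkU
                    · push_neg at hkU
                      rw [hzother k hk1 hk2 hkU.1 hkU.2]
                      exact hxk
          · funext t
            have hna := fixed_not_above hinv hfix hs t.2
            have ht1 : (↑t : S) ≠ i₀ := fun h => hs (h ▸ t.2)
            have ht2 : (↑t : S) ≠ σ i₀ := by
              intro h
              have h' := t.2
              rw [h, hinv] at h'
              exact hs h'.symm
            exact hzother ↑t ht1 ht2 hna.1 hna.2
        rcases hsym i₀ with hset | ⟨hgv, hzero⟩
        · have hmem : grundyValue ((x i₀).moveLeft j) ∈ grundySet (x (σ i₀)) := by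
            rw [← hset]
            exact ⟨j, rfl⟩
          obtain ⟨j', hj'⟩ := hmem
          exact mirror j' hj'
        · rcases (grundyValue_ne_moveLeft j).lt_or_gt with hlt | hgt
          · obtain ⟨j', hj'⟩ := exists_grundyValue_moveLeft_of_lt (hgv ▸ hlt)
            exact mirror j' hj'
          · obtain ⟨j₂, hj₂⟩ := exists_grundyValue_moveLeft_of_lt hgt
            have e : (x i₀).moveLeft j = ojNextL x i₀ j i₀ := (ojNextL_self x i₀ j).symm
            refine ⟨i₀, cast (congrArg PGame.LeftMoves e) j₂, ?_⟩
            set zc := cast (congrArg PGame.LeftMoves e) j₂ with hzcdef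
            have hzi : ojNextL (ojNextL x i₀ j) i₀ zc i₀ = ((x i₀).moveLeft j).moveLeft j₂ := by
              rw [ojNextL_self]; exact moveLeft_cast e j₂
            have hzother : ∀ k, k ≠ i₀ → ojNextL (ojNextL x i₀ j) i₀ zc k = x k := by
              intro k hk
              by_cases h : i₀ < k
              · rw [ojNextL_lt _ _ h]
                exact (hzero k (Or.inl h)).symm
              · rw [ojNextL_other _ _ hk h, ojNextL_other _ _ hk h]
            constructor
            · intro i
              by_cases hi1 : i = i₀
              · subst hi1
                right
                constructor
                · rw [hzi, hj₂, hzother (σ i) hs]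
                  exact hgv
                · intro k hk
                  have hk1 : k ≠ i := by
                    rintro rfl
                    rcases hk with h | h
                    exacts [lt_irrefl _ h, h2 h]
                  rw [hzother k hk1]
                  exact hzero k hk
              · by_cases hi2 : i = σ i₀
                · subst hi2
                  right
                  constructor
                  · rw [hzother (σ i₀) hs, hinv, hzi, hj₂]
                    exact hgv.symm
                  · intro k hk
                    rw [hinv] at hk
                    have hk' : i₀ < k ∨ σ i₀ < k := Or.symm hk
                    have hk1 : k ≠ i₀ := fun hh => ne_zero_of_leftMoves j (hh ▸ hzero k hk')
                    rw [hzother k hk1]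
                    exact hzero k hk'
                · have hσi1 : σ i ≠ i₀ := by
                    intro h
                    have h' := congrArg σ h
                    rw [hinv] at h'
                    exact hi2 h'
                  rw [hzother i hi1, hzother (σ i) hσi1]
                  rcases hsym i with h | ⟨hg, h0⟩
                  · exact Or.inl h
                  · right
                    refine ⟨hg, fun k hk => ?_⟩
                    have hxk := h0 k hk
                    have hk1 : k ≠ i₀ := fun h => ne_zero_of_leftMoves j (h ▸ hxk)
                    rw [hzother k hk1]
                    exact hxk
            · funext t
              exact hzother ↑t (fun h => hs (h ▸ t.2))
      have hstep := ih _ (TransGen.head (ojrel_L _ c jc) (TransGen.single (ojrel_L x i₀ j)))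
        (hyacc.inv (ojrel_L _ c jc)) hsymz
      rw [hresz] at hstep
      intro hcontra
      exact gv_ojoin_ne hyacc c jc (hstep.trans hcontra.symm)
  have hB : ∀ q : (Σ i₀ : {i : S // σ i = i},
        ((fun i : {i : S // σ i = i} => x ↑i) i₀).LeftMoves),
      grundyValue (ojoin (ojNextL (fun i : {i : S // σ i = i} => x ↑i) q.1 q.2))
        ≠ grundyValue (ojoin x) := by
    rintro ⟨⟨i₀, hs⟩, j⟩
    rw [← hfixmove i₀ hs j]
    exact gv_ojoin_ne hx i₀ j
  apply le_antisymm
  · rw [ojoin_eq x hx]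
    apply grundyValue_le_of_forall_moveLeft
    rintro ⟨i₀, j⟩
    exact hA i₀ j
  · rw [ojoin_eq _ hrx]
    apply grundyValue_le_of_forall_moveLeft
    exact hB

end
end OJAux

/-- mirror symmetry: if `σ` is a weakly order-preserving involution of `S` with
`Γ₁(G i) = Γ₁(G (σ i))` for all `i` whose fixed points form a lower set `S^σ`, then
`Γ₀(S ⋈ G) = Γ₀(S^σ ⋈ G)`. -/
theorem ojoin_symmetry {S : Type} [PartialOrder S] (G : S → PGame)
    (hI : ∀ i, (G i).Impartial) (hG : Acc OJRel G)
    (σ : S → S) (hinv : σ ∘ σ = id) (hw : WeaklyOrderPreserving σ)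
    (hfix : IsLowerSet {i : S | σ i = i})
    (hsym : ∀ i, grundySet (G i) = grundySet (G (σ i))) :
    grundyValue (ojoin G) = grundyValue (ojoin fun i : {i : S // σ i = i} => G i) := by
  have hinv' : ∀ i, σ (σ i) = i := fun i => congrFun hinv i
  exact OJAux.main_aux hinv' hw hfix G hG.transGen hG (fun i => Or.inl (hsym i))
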